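/- A bounded operator A ∈ L(B, B*) is positive if and only if there exist a Hilbert space H and a bounded operator T ∈ L(B, H) such that ⟨Ab, c⟩ = ⟨Tb, Tc⟩_H for all b, c ∈ B. -/

import Mathlib

open scoped ComplexOrder

/-- The conjugate dual of a complex normed space: continuous anti-linear functionals. -/
abbrev ConjDual (B : Type*) [NormedAddCommGroup B] [NormedSpace ℂ B] :=
  B →SL[starRingEnd ℂ] ℂ

/-- Type synonym used as carrier of the pre-Hilbert structure induced by `A`. -/
def PreH {B : Type u} [NormedAddCommGroup B] [NormedSpace ℂ B]
    (_A : B →L[ℂ] ConjDual B) : Type u := B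

/-- A positive operator is hermitian. -/
theorem herm_of_pos {B : Type u} [NormedAddCommGroup B] [NormedSpace ℂ B]
    (A : B →L[ℂ] ConjDual B) (h : ∀ b : B, 0 ≤ A b b) (b c : B) :
    A b c = starRingEnd ℂ (A c b) := by
  have him : ∀ x : B, (A x x).im = 0 := fun x => ((Complex.le_def.mp (h x)).2).symm
  have h1 := him (b + c)
  have h2 := him (b + Complex.I • c)
  have e1 : A (b + c) (b + c) = A b b + A b c + A c b + A c c := by
    simp [map_add]; ring
  have e2 : A (b + Complex.I • c) (b + Complex.I • c)
      = A b b + A c c - Complex.I * A b c + Complex.I * A c b := by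
    simp [map_add, map_smulₛₗ, Complex.conj_I]
    linear_combination (-(A c c : ℂ)) * Complex.I_sq
  rw [e1] at h1
  rw [e2] at h2
  simp only [Complex.add_im, Complex.sub_im, Complex.mul_im, Complex.I_re, Complex.I_im,
    him b, him c] at h1 h2
  apply Complex.ext <;> simp [Complex.conj_re, Complex.conj_im] <;> linarith

/-- `A : B → B*` is positive iff it factors through a Hilbert space:
`⟨Ab, c⟩ = ⟨Tb, Tc⟩_H` (the Hilbert inner product conjugate-linear in the second slot,
which in Mathlib's convention is `inner (T c) (T b)`). -/
theorem positive_iff_factorization {B : Type u} [NormedAddCommGroup B] [NormedSpace ℂ B]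
    [CompleteSpace B] (A : B →L[ℂ] ConjDual B) :
    (∀ b : B, 0 ≤ A b b) ↔
      ∃ (H : Type u) (_ : NormedAddCommGroup H) (_ : InnerProductSpace ℂ H)
        (_ : CompleteSpace H) (T : B →L[ℂ] H),
        ∀ b c : B, A b c = inner ℂ (T c) (T b) := by
  constructor
  · intro h
    -- Put a pre-inner-product structure on `PreH A`
    letI : AddCommGroup (PreH A) := inferInstanceAs (AddCommGroup B)
    letI : Module ℂ (PreH A) := inferInstanceAs (Module ℂ B)
    letI core : PreInnerProductSpace.Core ℂ (PreH A) :=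
      { inner := fun x y => A (y : B) (x : B)
        conj_inner_symm := fun x y => (herm_of_pos A h y x).symm
        re_inner_nonneg := fun x => (Complex.le_def.mp (h x)).1
        add_left := fun x y z => map_add (A (z : B)) (x : B) (y : B)
        smul_left := fun x y r => map_smulₛₗ (A (y : B)) r (x : B) }
    letI : Inner ℂ (PreH A) := core.toInner
    letI : SeminormedAddCommGroup (PreH A) :=
      InnerProductSpace.Core.toSeminormedAddCommGroup (c := core)
    letI : NormedSpace ℂ (PreH A) :=
      InnerProductSpace.Core.toNormedSpace (c := core)
    letI : InnerProductSpace ℂ (PreH A) :=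
      { norm_sq_eq_re_inner := fun x => by
          have h₂ : (0:ℝ) ≤ Complex.re (core.inner x x) := core.re_inner_nonneg x
          show (Real.sqrt (Complex.re (core.inner x x))) ^ 2 = _
          rw [Real.sq_sqrt h₂]; rfl
        conj_inner_symm := core.conj_inner_symm
        add_left := core.add_left
        smul_left := core.smul_left }
    -- the inclusion `B → PreH A` is a bounded linear map
    let J₀ : B →ₗ[ℂ] PreH A :=
      { toFun := fun x => (x : PreH A)
        map_add' := fun _ _ => rfl
        map_smul' := fun _ _ => rfl }
    have bound : ∀ x : B, ‖J₀ x‖ ≤ Real.sqrt ‖A‖ * ‖x‖ := by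
      intro x
      have h1 : ‖J₀ x‖ = Real.sqrt (Complex.re (A x x)) := rfl
      have h2 : Complex.re (A x x) ≤ ‖A‖ * ‖x‖ ^ 2 := by
        calc Complex.re (A x x) ≤ ‖A x x‖ := Complex.re_le_norm _
          _ ≤ ‖A x‖ * ‖x‖ := (A x).le_opNorm x
          _ ≤ (‖A‖ * ‖x‖) * ‖x‖ :=
              mul_le_mul_of_nonneg_right (A.le_opNorm x) (norm_nonneg x)
          _ = ‖A‖ * ‖x‖ ^ 2 := by ring
      rw [h1]
      calc Real.sqrt (Complex.re (A x x)) ≤ Real.sqrt (‖A‖ * ‖x‖ ^ 2) :=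
            Real.sqrt_le_sqrt h2
        _ = Real.sqrt ‖A‖ * ‖x‖ := by
            rw [Real.sqrt_mul (norm_nonneg A), Real.sqrt_sq (norm_nonneg x)]
    let J : B →L[ℂ] PreH A := LinearMap.mkContinuous J₀ (Real.sqrt ‖A‖) bound
    -- the Hilbert space
    refine ⟨UniformSpace.Completion (SeparationQuotient (PreH A)), inferInstance,
      inferInstance, inferInstance,
      (UniformSpace.Completion.toComplL.comp
        (SeparationQuotient.mkCLM ℂ (PreH A))).comp J, fun b c => ?_⟩
    simp only [ContinuousLinearMap.comp_apply, UniformSpace.Completion.coe_toComplL,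
      SeparationQuotient.mkCLM_apply]
    rw [UniformSpace.Completion.inner_coe, SeparationQuotient.inner_mk_mk]
    rfl
  · rintro ⟨H, _, _, _, T, hT⟩ b
    rw [hT b b]
    rw [Complex.le_def]
    constructor
    · simpa using inner_self_nonneg (𝕜 := ℂ) (x := T b)
    · have := inner_self_im (𝕜 := ℂ) (T b)
      rw [RCLike.im_to_complex] at this
      exact this.symm
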